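/- Let S₁₂, …, S₁ₙ be bounded operators on a complex Hilbert space H. The numerical radius of the n×n block operator matrix whose first row is (O, S₁₂, …, S₁ₙ), whose first column is (O, S₁₂, …, S₁ₙ)ᵀ, and all other entries zero, is at most √(∑_{k=2}^{n} w(S₁ₖ)²). -/

import Mathlib

noncomputable def numRadius {E : Type*} [NormedAddCommGroup E] [InnerProductSpace ℂ E]
    (T : E →L[ℂ] E) : ℝ :=
  sSup {r : ℝ | ∃ x : E, ‖x‖ = 1 ∧ r = ‖(inner ℂ (T x) x : ℂ)‖}

noncomputable def blockOp {H : Type*} [NormedAddCommGroup H] [InnerProductSpace ℂ H]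
    (n : ℕ) (M : Fin n → Fin n → H →L[ℂ] H) :
    (PiLp 2 fun _ : Fin n => H) →L[ℂ] (PiLp 2 fun _ : Fin n => H) :=
  (PiLp.continuousLinearEquiv 2 ℂ (fun _ : Fin n => H)).symm.toContinuousLinearMap ∘L
    (ContinuousLinearMap.pi fun i => ∑ j, (M i j).comp (ContinuousLinearMap.proj j)) ∘L
    (PiLp.continuousLinearEquiv 2 ℂ (fun _ : Fin n => H)).toContinuousLinearMap

section aux

variable {E : Type*} [NormedAddCommGroup E] [InnerProductSpace ℂ E]

lemma numRadius_bddAbove (T : E →L[ℂ] E) :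
    BddAbove {r : ℝ | ∃ x : E, ‖x‖ = 1 ∧ r = ‖(inner ℂ (T x) x : ℂ)‖} := by
  refine ⟨‖T‖, ?_⟩
  rintro r ⟨x, hx, rfl⟩
  calc ‖(inner ℂ (T x) x : ℂ)‖ ≤ ‖T x‖ * ‖x‖ := norm_inner_le_norm _ _
    _ ≤ ‖T‖ * ‖x‖ * ‖x‖ := by gcongr; exact T.le_opNorm x
    _ = ‖T‖ := by rw [hx]; ring

lemma numRadius_nonneg (T : E →L[ℂ] E) : 0 ≤ numRadius T :=
  Real.sSup_nonneg (by rintro r ⟨x, hx, rfl⟩; positivity)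

lemma inner_le_numRadius (T : E →L[ℂ] E) (z : E) :
    ‖(inner ℂ (T z) z : ℂ)‖ ≤ numRadius T * ‖z‖ ^ 2 := by
  rcases eq_or_ne z 0 with rfl | hz
  · simp [numRadius_nonneg]
  · have hz' : ‖z‖ ≠ 0 := norm_ne_zero_iff.mpr hz
    set c : ℂ := ((‖z‖⁻¹ : ℝ) : ℂ) with hc
    have hcn : ‖c‖ = ‖z‖⁻¹ := by
      simp [hc, abs_of_nonneg (inv_nonneg.mpr (norm_nonneg z))]
    have h1 : ‖c • z‖ = 1 := by
      rw [norm_smul, hcn]; field_simp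
    have key : ‖(inner ℂ (T (c • z)) (c • z) : ℂ)‖ ≤ numRadius T :=
      le_csSup (numRadius_bddAbove T) ⟨_, h1, rfl⟩
    have h2 : (inner ℂ (T (c • z)) (c • z) : ℂ) = (starRingEnd ℂ) c * c * inner ℂ (T z) z := by
      rw [map_smul, inner_smul_left, inner_smul_right]; ring
    rw [h2] at key
    have h3 : ‖(starRingEnd ℂ) c * c * (inner ℂ (T z) z : ℂ)‖
        = ‖z‖⁻¹ * ‖z‖⁻¹ * ‖(inner ℂ (T z) z : ℂ)‖ := by
      simp [norm_mul, hcn]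
    rw [h3] at key
    have hzpos : (0:ℝ) < ‖z‖ := lt_of_le_of_ne (norm_nonneg z) (Ne.symm hz')
    have hid : ‖z‖⁻¹ * ‖z‖⁻¹ * ‖(inner ℂ (T z) z : ℂ)‖ * ‖z‖ ^ 2 = ‖(inner ℂ (T z) z : ℂ)‖ := by
      field_simp
    have hmul := mul_le_mul_of_nonneg_right key (sq_nonneg ‖z‖)
    rwa [hid] at hmul

lemma inner_add_inner_le (T : E →L[ℂ] E) (u v : E) :
    ‖(inner ℂ (T u) v : ℂ) + inner ℂ (T v) u‖ ≤ numRadius T * (‖u‖ ^ 2 + ‖v‖ ^ 2) := by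
  have key : (inner ℂ (T (u + v)) (u + v) : ℂ) - inner ℂ (T (u - v)) (u - v)
      = 2 * ((inner ℂ (T u) v : ℂ) + inner ℂ (T v) u) := by
    rw [map_add, map_sub, inner_add_left, inner_add_right, inner_add_right,
      inner_sub_left, inner_sub_right, inner_sub_right]
    ring
  have h2 : (2:ℝ) * ‖(inner ℂ (T u) v : ℂ) + inner ℂ (T v) u‖
      = ‖(inner ℂ (T (u + v)) (u + v) : ℂ) - inner ℂ (T (u - v)) (u - v)‖ := by
    rw [key, norm_mul]; norm_num
  have h3 : ‖(inner ℂ (T (u + v)) (u + v) : ℂ) - inner ℂ (T (u - v)) (u - v)‖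
      ≤ numRadius T * ‖u + v‖ ^ 2 + numRadius T * ‖u - v‖ ^ 2 :=
    (norm_sub_le _ _).trans (add_le_add (inner_le_numRadius T _) (inner_le_numRadius T _))
  have h4 : ‖u + v‖ ^ 2 + ‖u - v‖ ^ 2 = 2 * (‖u‖ ^ 2 + ‖v‖ ^ 2) := by
    have := parallelogram_law_with_norm ℂ u v
    nlinarith [this]
  nlinarith [h2, h3, h4, numRadius_nonneg T, sq_nonneg (‖u+v‖), sq_nonneg (‖u-v‖)]

lemma inner_add_inner_le' (T : E →L[ℂ] E) (u v : E) :
    ‖(inner ℂ (T u) v : ℂ) + inner ℂ (T v) u‖ ≤ 2 * numRadius T * (‖u‖ * ‖v‖) := by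
  rcases eq_or_ne u 0 with rfl | hu
  · simp
  rcases eq_or_ne v 0 with rfl | hv
  · simp
  have hu' : (0:ℝ) < ‖u‖ := norm_pos_iff.mpr hu
  have hv' : (0:ℝ) < ‖v‖ := norm_pos_iff.mpr hv
  set t : ℝ := Real.sqrt (‖v‖ / ‖u‖) with ht
  have htpos : 0 < t := Real.sqrt_pos.mpr (by positivity)
  have ht2 : t ^ 2 = ‖v‖ / ‖u‖ := Real.sq_sqrt (by positivity)
  set c : ℂ := (t : ℂ) with hc
  have hcne : c ≠ 0 := Complex.ofReal_ne_zero.mpr htpos.ne'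
  have hconj : (starRingEnd ℂ) c = c := by simp [hc, Complex.conj_ofReal]
  have key := inner_add_inner_le T (c • u) (c⁻¹ • v)
  have e1 : (inner ℂ (T (c • u)) (c⁻¹ • v) : ℂ) = inner ℂ (T u) v := by
    rw [map_smul, inner_smul_left, inner_smul_right, hconj]
    field_simp
  have e2 : (inner ℂ (T (c⁻¹ • v)) (c • u) : ℂ) = inner ℂ (T v) u := by
    rw [map_smul, inner_smul_left, inner_smul_right, map_inv₀, hconj]
    field_simp
  rw [e1, e2] at key
  have hcn : ‖c‖ = t := by
    simp [hc, abs_of_pos htpos]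
  have e3 : ‖c • u‖ ^ 2 = ‖u‖ * ‖v‖ := by
    rw [norm_smul, hcn, mul_pow, ht2]; field_simp
  have e4 : ‖c⁻¹ • v‖ ^ 2 = ‖u‖ * ‖v‖ := by
    rw [norm_smul, norm_inv, hcn, mul_pow, inv_pow, ht2]
    field_simp
  rw [e3, e4] at key
  calc ‖(inner ℂ (T u) v : ℂ) + inner ℂ (T v) u‖ ≤ numRadius T * (‖u‖ * ‖v‖ + ‖u‖ * ‖v‖) := key
    _ = 2 * numRadius T * (‖u‖ * ‖v‖) := by ring

end aux

variable {H : Type*} [NormedAddCommGroup H] [InnerProductSpace ℂ H]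
theorem stmt17 (n : ℕ) [NeZero n] (S : Fin n → H →L[ℂ] H) :
    numRadius (blockOp n (fun i j =>
        if i = 0 ∧ j ≠ 0 then S j else if j = 0 ∧ i ≠ 0 then S i else 0)) ≤
      Real.sqrt (∑ k ∈ Finset.univ.erase (0 : Fin n), numRadius (S k) ^ 2) := by
  set M : Fin n → Fin n → H →L[ℂ] H := fun i j =>
    if i = 0 ∧ j ≠ 0 then S j else if j = 0 ∧ i ≠ 0 then S i else 0 with hM
  set W : ℝ := Real.sqrt (∑ k ∈ Finset.univ.erase (0 : Fin n), numRadius (S k) ^ 2) with hW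
  have hWnn : 0 ≤ W := Real.sqrt_nonneg _
  refine Real.sSup_le ?_ hWnn
  rintro r ⟨x, hx, rfl⟩
  -- compute the action of blockOp
  have happ : ∀ i, (blockOp n M) x i = ∑ j, M i j (x j) := by
    intro i
    simp [blockOp, ContinuousLinearMap.proj, ContinuousLinearMap.sum_apply]
  have hinner : (inner ℂ ((blockOp n M) x) x : ℂ)
      = ∑ k ∈ Finset.univ.erase (0 : Fin n),
          ((inner ℂ (S k (x k)) (x 0) : ℂ) + inner ℂ (S k (x 0)) (x k)) := by
    rw [PiLp.inner_apply]
    have : ∀ i, (inner ℂ ((blockOp n M) x i) (x i) : ℂ)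
        = ∑ j, inner ℂ (M i j (x j)) (x i) := by
      intro i; rw [happ, sum_inner]
    simp_rw [this]
    rw [← Finset.add_sum_erase Finset.univ _ (Finset.mem_univ (0 : Fin n))]
    have h0 : ∀ j, (inner ℂ (M 0 j (x j)) (x 0) : ℂ)
        = if j ≠ 0 then inner ℂ (S j (x j)) (x 0) else 0 := by
      intro j
      by_cases hj : j = 0 <;> simp [hM, hj]
    have hrest : ∀ i ∈ Finset.univ.erase (0 : Fin n),
        (∑ j, (inner ℂ (M i j (x j)) (x i) : ℂ)) = inner ℂ (S i (x 0)) (x i) := by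
      intro i hi
      have hi0 : i ≠ 0 := Finset.ne_of_mem_erase hi
      rw [Finset.sum_eq_single (0 : Fin n)]
      · simp [hM, hi0]
      · intro j _ hj
        simp [hM, hi0, hj]
      · simp
    rw [Finset.sum_congr rfl hrest]
    simp_rw [h0]
    have hfilter : (Finset.univ.filter fun j : Fin n => j ≠ 0) = Finset.univ.erase 0 := by
      ext j; simp [Finset.mem_erase, and_comm]
    rw [← Finset.sum_filter, hfilter, ← Finset.sum_add_distrib]
  rw [hinner]
  have step1 : ‖∑ k ∈ Finset.univ.erase (0 : Fin n),
      ((inner ℂ (S k (x k)) (x 0) : ℂ) + inner ℂ (S k (x 0)) (x k))‖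
      ≤ ∑ k ∈ Finset.univ.erase (0 : Fin n), 2 * numRadius (S k) * (‖x k‖ * ‖x 0‖) :=
    (norm_sum_le _ _).trans (Finset.sum_le_sum fun k _ => inner_add_inner_le' (S k) (x k) (x 0))
  refine step1.trans ?_
  -- Cauchy-Schwarz
  have CS : ∑ k ∈ Finset.univ.erase (0 : Fin n), numRadius (S k) * ‖x k‖
      ≤ W * Real.sqrt (∑ k ∈ Finset.univ.erase (0 : Fin n), ‖x k‖ ^ 2) := by
    have h := Finset.sum_mul_sq_le_sq_mul_sq (Finset.univ.erase (0 : Fin n))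
      (fun k => numRadius (S k)) (fun k => ‖x k‖)
    have hnn : 0 ≤ ∑ k ∈ Finset.univ.erase (0 : Fin n), numRadius (S k) * ‖x k‖ :=
      Finset.sum_nonneg fun k _ => mul_nonneg (numRadius_nonneg _) (norm_nonneg _)
    calc ∑ k ∈ Finset.univ.erase (0 : Fin n), numRadius (S k) * ‖x k‖
        = Real.sqrt ((∑ k ∈ Finset.univ.erase (0 : Fin n), numRadius (S k) * ‖x k‖) ^ 2) :=
          (Real.sqrt_sq hnn).symm
      _ ≤ Real.sqrt ((∑ k ∈ Finset.univ.erase (0 : Fin n), numRadius (S k) ^ 2) *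
            (∑ k ∈ Finset.univ.erase (0 : Fin n), ‖x k‖ ^ 2)) := Real.sqrt_le_sqrt h
      _ = W * Real.sqrt (∑ k ∈ Finset.univ.erase (0 : Fin n), ‖x k‖ ^ 2) :=
          Real.sqrt_mul (Finset.sum_nonneg fun k _ => sq_nonneg _) _
  set a : ℝ := ‖x 0‖ with ha
  set b : ℝ := Real.sqrt (∑ k ∈ Finset.univ.erase (0 : Fin n), ‖x k‖ ^ 2) with hb
  have hb2 : b ^ 2 = ∑ k ∈ Finset.univ.erase (0 : Fin n), ‖x k‖ ^ 2 :=
    Real.sq_sqrt (Finset.sum_nonneg fun k _ => sq_nonneg _)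
  have hab : a ^ 2 + b ^ 2 = 1 := by
    have hnorm : ‖x‖ ^ 2 = ∑ i, ‖x i‖ ^ 2 := PiLp.norm_sq_eq_of_L2 _ x
    rw [hb2, ha]
    rw [hx] at hnorm
    rw [← Finset.add_sum_erase Finset.univ (fun i => ‖x i‖ ^ 2) (Finset.mem_univ (0 : Fin n))]
      at hnorm
    linarith [hnorm]
  calc ∑ k ∈ Finset.univ.erase (0 : Fin n), 2 * numRadius (S k) * (‖x k‖ * ‖x 0‖)
      = 2 * a * ∑ k ∈ Finset.univ.erase (0 : Fin n), numRadius (S k) * ‖x k‖ := by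
        rw [Finset.mul_sum]; congr 1; ext k; ring
    _ ≤ 2 * a * (W * b) := by
        apply mul_le_mul_of_nonneg_left CS
        positivity
    _ ≤ W * (a ^ 2 + b ^ 2) := by nlinarith [sq_nonneg (a - b), hWnn]
    _ = W := by rw [hab, mul_one]
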